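/- Let f(x) = 1/x mod 1 be the Gauss map on (0,1], with branch domains Z_j = (1/(j+1), 1/j) for j ≥ 1, and φ = −log|Df| (so that e^{S_nφ} = 1/|Df^n|). There exists C_d > 0 such that for all n ∈ ℕ and all x, y with f^i x and f^i y in the same Z_{j_i} for each i = 0, 1, …, n−1: |e^{S_nφ(x) − S_nφ(y)} − 1| ≤ C_d |f^n x − f^n y|^{1/2}, i.e. | |Df^n(y)|/|Df^n(x)| − 1 | ≤ C_d |f^n x − f^n y|^{1/2}. -/

import Mathlib

open MeasureTheory Filter Set Topology

noncomputable section

/-- Birkhoff sum `S_n φ = ∑_{i<n} φ ∘ f^i`. -/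
def birkhoff {X : Type*} (f : X → X) (φ : X → ℝ) (n : ℕ) (x : X) : ℝ :=
  ∑ i ∈ Finset.range n, φ (f^[i] x)

/-- The Gauss map `f(x) = 1/x mod 1`. -/
def gaussMap (x : ℝ) : ℝ := Int.fract x⁻¹

/-- The geometric potential `φ = −log|Df|` of the Gauss map. -/
def gaussPot (x : ℝ) : ℝ := -Real.log |deriv gaussMap x|

/-- The branch domain `Z_j = (1/(j+1), 1/j)` of the Gauss map. -/
def gaussBranch (j : ℕ) : Set ℝ := Set.Ioo ((j : ℝ) + 1)⁻¹ ((j : ℝ))⁻¹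

end

namespace S16
variable {j : ℕ} {x y : ℝ}

lemma branch_pos (hx : x ∈ gaussBranch j) : 0 < x := lt_trans (by positivity) hx.1

lemma branch_lt_one (hj : 1 ≤ j) (hx : x ∈ gaussBranch j) : x < 1 := by
  refine lt_of_lt_of_le hx.2 ?_
  rw [inv_le_one_iff₀]; right; exact_mod_cast hj

lemma branch_inv (hx : x ∈ gaussBranch j) :
    (j : ℝ) < x⁻¹ ∧ x⁻¹ < (j : ℝ) + 1 := by
  have hx0 := branch_pos hx
  constructor
  · rcases Nat.eq_zero_or_pos j with rfl | hj
    · simpa using hx0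
    · have hj0 : (0:ℝ) < j := by exact_mod_cast hj
      rw [lt_inv_comm₀ hj0 hx0]
      exact hx.2
  · have h1 : (0:ℝ) < (j:ℝ) + 1 := by positivity
    rw [inv_lt_comm₀ hx0 h1]
    exact hx.1

lemma floor_inv (hx : x ∈ gaussBranch j) : ⌊x⁻¹⌋ = (j : ℤ) := by
  obtain ⟨h1, h2⟩ := branch_inv hx
  rw [Int.floor_eq_iff]
  constructor <;> push_cast
  · exact le_of_lt h1
  · exact h2

lemma gaussMap_branch (hx : x ∈ gaussBranch j) : gaussMap x = x⁻¹ - j := by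
  rw [gaussMap, Int.fract, floor_inv hx]; norm_num

lemma hasDerivAt_gaussMap (hx : x ∈ gaussBranch j) :
    HasDerivAt gaussMap (-(x^2)⁻¹) x := by
  have hev : gaussMap =ᶠ[𝓝 x] fun t => t⁻¹ - (j:ℝ) := by
    filter_upwards [isOpen_Ioo.mem_nhds hx] with t ht
    exact gaussMap_branch ht
  exact ((hasDerivAt_inv (branch_pos hx).ne').sub_const _).congr_of_eventuallyEq hev

lemma gaussPot_branch (hx : x ∈ gaussBranch j) :
    gaussPot x = 2 * Real.log x := by
  have hx0 := branch_pos hx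
  rw [gaussPot, (hasDerivAt_gaussMap hx).deriv, abs_neg, abs_inv, abs_of_pos (by positivity),
    Real.log_inv, neg_neg, Real.log_pow]
  norm_num

lemma exp_bound (t : ℝ) : |Real.exp t - 1| ≤ |t| * Real.exp |t| := by
  rcases le_or_gt 0 t with h | h
  · rw [abs_of_nonneg h, abs_of_nonneg (by simpa using Real.one_le_exp h)]
    have h1 := Real.add_one_le_exp (-t)
    have h2 : Real.exp (-t) * Real.exp t = 1 := by
      rw [← Real.exp_add]; simp
    nlinarith [Real.exp_pos t]
  · rw [abs_of_neg h, abs_of_nonpos (by simp [Real.exp_le_one_iff.mpr h.le])]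
    have h1 := Real.add_one_le_exp t
    have h2 : (1:ℝ) ≤ Real.exp (-t) := Real.one_le_exp (by linarith)
    nlinarith

lemma log_est (hx0 : 0 < x) (hy0 : 0 < y) (hx1 : x ≤ 1) (hy1 : y ≤ 1) :
    |Real.log x - Real.log y| ≤ |x - y| / (x * y) := by
  have key : ∀ a b : ℝ, 0 < a → 0 < b → a ≤ 1 → b ≤ a →
      Real.log a - Real.log b ≤ (a - b) / (a * b) := by
    intro a b ha hb ha1 hba
    rw [← Real.log_div ha.ne' hb.ne']
    have h1 : Real.log (a / b) ≤ a / b - 1 := Real.log_le_sub_one_of_pos (by positivity)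
    have h2 : a / b - 1 = (a - b) / b := by field_simp
    have h3 : (a - b) / b ≤ (a - b) / (a * b) := by
      apply div_le_div_of_nonneg_left (by linarith) (by positivity)
      nlinarith
    linarith
  rcases le_total y x with h | h
  · rw [abs_of_nonneg (sub_nonneg.2 (Real.log_le_log hy0 h)),
      abs_of_nonneg (sub_nonneg.2 h)]
    exact key x y hx0 hy0 hx1 h
  · rw [abs_of_nonpos (sub_nonpos.2 (Real.log_le_log hx0 h)),
      abs_of_nonpos (sub_nonpos.2 h)]
    have := key y x hy0 hx0 hy1 h
    rw [mul_comm] at this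
    rw [neg_sub, neg_sub]
    linarith

lemma step_abs (hx : x ∈ gaussBranch j) (hy : y ∈ gaussBranch j) :
    |gaussMap x - gaussMap y| = |x - y| / (x * y) := by
  have hx0 := branch_pos hx
  have hy0 := branch_pos hy
  have e : gaussMap x - gaussMap y = (y - x) / (x * y) := by
    rw [gaussMap_branch hx, gaussMap_branch hy]
    field_simp
    ring
  rw [e, abs_div, abs_of_pos (mul_pos hx0 hy0), abs_sub_comm]

lemma two_step (hj : 1 ≤ j) (hx : x ∈ gaussBranch j) : x * gaussMap x ≤ 1/2 := by
  have hx0 := branch_pos hx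
  have hj1 : (1:ℝ) ≤ j := by exact_mod_cast hj
  have h0 : (0:ℝ) < (j:ℝ) + 1 := by positivity
  have h1 : (1:ℝ) < ((j:ℝ) + 1) * x := by
    calc (1:ℝ) = ((j:ℝ) + 1) * ((j:ℝ) + 1)⁻¹ := by field_simp
    _ < ((j:ℝ) + 1) * x := (mul_lt_mul_iff_right₀ h0).2 hx.1
  rw [gaussMap_branch hx]
  have hxx : x * (x⁻¹ - (j:ℝ)) = 1 - j * x := by
    field_simp
  rw [hxx]
  nlinarith

/-- Two-sided itinerary hypothesis. -/
def Itin (n : ℕ) (x y : ℝ) : Prop :=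
  ∀ i < n, ∃ j : ℕ, 1 ≤ j ∧ gaussMap^[i] x ∈ gaussBranch j ∧ gaussMap^[i] y ∈ gaussBranch j

lemma Itin.mono {n m : ℕ} (h : Itin n x y) (hm : m ≤ n) : Itin m x y :=
  fun i hi => h i (lt_of_lt_of_le hi hm)

lemma D_succ {n : ℕ} (h : Itin n x y) {i : ℕ} (hi : i < n) :
    |gaussMap^[i] x - gaussMap^[i] y| =
      (gaussMap^[i] x * gaussMap^[i] y) * |gaussMap^[i+1] x - gaussMap^[i+1] y| := by
  obtain ⟨j, hj, hxj, hyj⟩ := h i hi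
  have hx0 := branch_pos hxj
  have hy0 := branch_pos hyj
  rw [Function.iterate_succ_apply', Function.iterate_succ_apply', step_abs hxj hyj]
  field_simp

lemma D_mono {n : ℕ} (h : Itin n x y) {i : ℕ} (hi : i < n) :
    |gaussMap^[i] x - gaussMap^[i] y| ≤ |gaussMap^[i+1] x - gaussMap^[i+1] y| := by
  obtain ⟨j, hj, hxj, hyj⟩ := h i hi
  have hx0 := branch_pos hxj
  have hy0 := branch_pos hyj
  have hx1 := branch_lt_one hj hxj
  have hy1 := branch_lt_one hj hyj
  rw [D_succ h hi]
  have hab : gaussMap^[i] x * gaussMap^[i] y ≤ 1 := by nlinarith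
  exact mul_le_of_le_one_left (abs_nonneg _) hab

lemma D_two {n : ℕ} (h : Itin n x y) {i : ℕ} (hi : i + 1 < n) :
    |gaussMap^[i] x - gaussMap^[i] y| ≤ |gaussMap^[i+2] x - gaussMap^[i+2] y| / 4 := by
  obtain ⟨j, hj, hxj, hyj⟩ := h i (by omega)
  obtain ⟨j', hj', hxj', hyj'⟩ := h (i+1) hi
  have hx0 := branch_pos hxj
  have hy0 := branch_pos hyj
  have hx0' := branch_pos hxj'
  have hy0' := branch_pos hyj'
  have h2x : gaussMap^[i] x * gaussMap^[i+1] x ≤ 1/2 := by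
    rw [Function.iterate_succ_apply']
    exact two_step hj hxj
  have h2y : gaussMap^[i] y * gaussMap^[i+1] y ≤ 1/2 := by
    rw [Function.iterate_succ_apply']
    exact two_step hj hyj
  have e1 := D_succ h (show i < n by omega)
  have e2 := D_succ h hi
  rw [e1, e2]
  have hD := abs_nonneg (gaussMap^[i+2] x - gaussMap^[i+2] y)
  nlinarith [mul_pos hx0' hy0', mul_pos hx0 hy0,
    mul_le_mul h2x h2y (by positivity) (by norm_num)]

lemma pot_step {n : ℕ} (h : Itin n x y) {i : ℕ} (hi : i < n) :
    |gaussPot (gaussMap^[i] x) - gaussPot (gaussMap^[i] y)|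
      ≤ 2 * |gaussMap^[i+1] x - gaussMap^[i+1] y| := by
  obtain ⟨j, hj, hxj, hyj⟩ := h i hi
  have hx0 := branch_pos hxj
  have hy0 := branch_pos hyj
  have hx1 := branch_lt_one hj hxj
  have hy1 := branch_lt_one hj hyj
  rw [gaussPot_branch hxj, gaussPot_branch hyj,
    show 2 * Real.log (gaussMap^[i] x) - 2 * Real.log (gaussMap^[i] y)
      = 2 * (Real.log (gaussMap^[i] x) - Real.log (gaussMap^[i] y)) by ring,
    abs_mul, abs_two]
  have hle := log_est hx0 hy0 hx1.le hy1.le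
  have hst := step_abs hxj hyj
  rw [← Function.iterate_succ_apply' gaussMap i x, ← Function.iterate_succ_apply' gaussMap i y]
    at hst
  rw [← hst] at hle
  linarith

lemma delta_bound : ∀ n : ℕ, ∀ x y : ℝ, Itin (n+1) x y →
    |birkhoff gaussMap gaussPot (n+1) x - birkhoff gaussMap gaussPot (n+1) y|
      ≤ 3 * |gaussMap^[n+1] x - gaussMap^[n+1] y| + 3 * |gaussMap^[n] x - gaussMap^[n] y| := by
  intro n
  induction n with
  | zero =>
    intro x y h
    simp only [Nat.zero_add] at h ⊢
    have h1 := pot_step h (show 0 < 1 by norm_num)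
    simp only [Nat.zero_add] at h1
    simp only [birkhoff, Finset.sum_range_one, Function.iterate_zero_apply] at *
    have := abs_nonneg (x - y)
    have := abs_nonneg (gaussMap^[1] x - gaussMap^[1] y)
    linarith
  | succ n ih =>
    intro x y h
    simp only [show n+1+1 = n+2 by omega] at h ⊢
    have h' : Itin (n+1) x y := h.mono (by omega)
    have IH := ih x y h'
    have hps := pot_step h (show n+1 < n+2 by omega)
    have hmono := D_mono h (show n+1 < n+2 by omega)
    have htwo := D_two h (show n+1 < n+2 by omega)
    simp only [show n+1+1 = n+2 by omega] at hps hmono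
    have hsum : ∀ z : ℝ, birkhoff gaussMap gaussPot (n+2) z
        = birkhoff gaussMap gaussPot (n+1) z + gaussPot (gaussMap^[n+1] z) := by
      intro z
      rw [birkhoff, Finset.sum_range_succ]; rfl
    rw [hsum x, hsum y]
    have habs : |birkhoff gaussMap gaussPot (n+1) x + gaussPot (gaussMap^[n+1] x)
        - (birkhoff gaussMap gaussPot (n+1) y + gaussPot (gaussMap^[n+1] y))|
        ≤ |birkhoff gaussMap gaussPot (n+1) x - birkhoff gaussMap gaussPot (n+1) y|
          + |gaussPot (gaussMap^[n+1] x) - gaussPot (gaussMap^[n+1] y)| := by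
      rw [show birkhoff gaussMap gaussPot (n+1) x + gaussPot (gaussMap^[n+1] x)
        - (birkhoff gaussMap gaussPot (n+1) y + gaussPot (gaussMap^[n+1] y))
        = (birkhoff gaussMap gaussPot (n+1) x - birkhoff gaussMap gaussPot (n+1) y)
          + (gaussPot (gaussMap^[n+1] x) - gaussPot (gaussMap^[n+1] y)) by ring]
      exact abs_add_le _ _
    have hD0 := abs_nonneg (gaussMap^[n+2] x - gaussMap^[n+2] y)
    linarith

/-- One-sided itinerary hypothesis. -/
def ItinX (n : ℕ) (x : ℝ) : Prop :=
  ∀ i < n, ∃ j : ℕ, 1 ≤ j ∧ gaussMap^[i] x ∈ gaussBranch j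

lemma exp_birkhoff {n : ℕ} (h : ItinX n x) :
    Real.exp (birkhoff gaussMap gaussPot n x) = ∏ i ∈ Finset.range n, (gaussMap^[i] x)^2 := by
  rw [birkhoff, Real.exp_sum]
  refine Finset.prod_congr rfl fun i hi => ?_
  obtain ⟨j, hj, hxj⟩ := h i (Finset.mem_range.1 hi)
  have hx0 := branch_pos hxj
  rw [gaussPot_branch hxj,
    show (2:ℝ) * Real.log (gaussMap^[i] x) = Real.log ((gaussMap^[i] x)^2) by
      rw [Real.log_pow]; norm_num]
  exact Real.exp_log (by positivity)

lemma hasDerivAt_iterate {n : ℕ} (h : ItinX n x) :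
    HasDerivAt (gaussMap^[n]) (∏ i ∈ Finset.range n, -(((gaussMap^[i] x))^2)⁻¹) x := by
  induction n with
  | zero => simpa using hasDerivAt_id x
  | succ n ih =>
    have h' : ItinX n x := fun i hi => h i (by omega)
    obtain ⟨j, hj, hxj⟩ := h n (by omega)
    have hg := hasDerivAt_gaussMap hxj
    have hcomp := HasDerivAt.comp x hg (ih h')
    rw [Finset.prod_range_succ, mul_comm]
    rw [show gaussMap^[n+1] = gaussMap ∘ gaussMap^[n] from Function.iterate_succ' gaussMap n]
    exact hcomp

lemma abs_deriv_iterate {n : ℕ} (h : ItinX n x) :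
    |deriv (gaussMap^[n]) x| = (∏ i ∈ Finset.range n, (gaussMap^[i] x)^2)⁻¹ := by
  rw [(hasDerivAt_iterate h).deriv, Finset.abs_prod, ← Finset.prod_inv_distrib]
  refine Finset.prod_congr rfl fun i hi => ?_
  obtain ⟨j, hj, hxj⟩ := h i (Finset.mem_range.1 hi)
  have := branch_pos hxj
  rw [abs_neg, abs_inv, abs_of_pos (by positivity)]

lemma ratio_eq {n : ℕ} (hx : ItinX n x) (hy : ItinX n y) :
    |deriv (gaussMap^[n]) y| / |deriv (gaussMap^[n]) x|
      = Real.exp (birkhoff gaussMap gaussPot n x - birkhoff gaussMap gaussPot n y) := by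
  rw [Real.exp_sub, exp_birkhoff hx, exp_birkhoff hy, abs_deriv_iterate hx,
    abs_deriv_iterate hy, inv_div_inv]

end S16

/-- **Lemma 2.8 (Hölder distortion for the Gauss map).** There is `C_d > 0` such that for all
`n` and all `x, y` with `f^i x, f^i y` in the same branch `Z_{j_i}` for `i = 0,…,n−1`:
`|e^{S_nφ(x) − S_nφ(y)} − 1| ≤ C_d |f^n x − f^n y|^{1/2}`, i.e.
`||Df^n(y)|/|Df^n(x)| − 1| ≤ C_d |f^n x − f^n y|^{1/2}`. -/
theorem stmt_16 :
    ∃ Cd : ℝ, 0 < Cd ∧ ∀ n : ℕ, ∀ x y : ℝ,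
      (∀ i < n, ∃ j : ℕ, 1 ≤ j ∧ gaussMap^[i] x ∈ gaussBranch j ∧
        gaussMap^[i] y ∈ gaussBranch j) →
      |Real.exp (birkhoff gaussMap gaussPot n x - birkhoff gaussMap gaussPot n y) - 1|
          ≤ Cd * |gaussMap^[n] x - gaussMap^[n] y| ^ ((1:ℝ)/2) ∧
      abs (|deriv (gaussMap^[n]) y| / |deriv (gaussMap^[n]) x| - 1)
          ≤ Cd * |gaussMap^[n] x - gaussMap^[n] y| ^ ((1:ℝ)/2) := by
  refine ⟨6 * Real.exp 6, by positivity, fun n x y h => ?_⟩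
  have hxI : S16.ItinX n x := fun i hi => (h i hi).imp fun j hj => ⟨hj.1, hj.2.1⟩
  have hyI : S16.ItinX n y := fun i hi => (h i hi).imp fun j hj => ⟨hj.1, hj.2.2⟩
  have hratio := S16.ratio_eq hxI hyI
  rw [hratio]
  have hmain : |Real.exp (birkhoff gaussMap gaussPot n x - birkhoff gaussMap gaussPot n y) - 1|
      ≤ 6 * Real.exp 6 * |gaussMap^[n] x - gaussMap^[n] y| ^ ((1:ℝ)/2) := by
    rcases Nat.eq_zero_or_pos n with rfl | hn
    · simp only [birkhoff, Finset.sum_range_zero, sub_self, Real.exp_zero, abs_zero]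
      positivity
    · obtain ⟨m, rfl⟩ := Nat.exists_eq_add_of_le hn
      set D := |gaussMap^[1+m] x - gaussMap^[1+m] y| with hD
      have hDn : 0 ≤ D := abs_nonneg _
      have hD1 : D ≤ 1 := by
        have hxE : gaussMap^[1+m] x = gaussMap (gaussMap^[m] x) := by
          rw [add_comm, Function.iterate_succ_apply']
        have hyE : gaussMap^[1+m] y = gaussMap (gaussMap^[m] y) := by
          rw [add_comm, Function.iterate_succ_apply']
        have h1 : 0 ≤ gaussMap (gaussMap^[m] x) := Int.fract_nonneg _
        have h2 : gaussMap (gaussMap^[m] x) < 1 := Int.fract_lt_one _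
        have h3 : 0 ≤ gaussMap (gaussMap^[m] y) := Int.fract_nonneg _
        have h4 : gaussMap (gaussMap^[m] y) < 1 := Int.fract_lt_one _
        rw [hD, hxE, hyE, abs_le]
        constructor <;> linarith
      have hIt : S16.Itin (m+1) x y := by
        intro i hi
        exact h i (by omega)
      have hdel := S16.delta_bound m x y hIt
      rw [show m + 1 = 1 + m by omega] at hdel
      have hmono : |gaussMap^[m] x - gaussMap^[m] y| ≤ D := by
        rw [hD, show 1 + m = m + 1 by omega]
        exact S16.D_mono hIt (by omega)
      set Δ := birkhoff gaussMap gaussPot (1+m) x - birkhoff gaussMap gaussPot (1+m) y with hΔ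
      have hΔ6 : |Δ| ≤ 6 * D := by linarith
      have hexp := S16.exp_bound Δ
      have hexp6 : Real.exp |Δ| ≤ Real.exp 6 := Real.exp_le_exp.2 (by nlinarith)
      have hb : |Real.exp Δ - 1| ≤ 6 * D * Real.exp 6 := by
        calc |Real.exp Δ - 1| ≤ |Δ| * Real.exp |Δ| := hexp
        _ ≤ (6 * D) * Real.exp 6 :=
            mul_le_mul hΔ6 hexp6 (Real.exp_pos _).le (by linarith)
      have hroot : D ≤ D ^ ((1:ℝ)/2) := by
        rcases eq_or_lt_of_le hDn with h0 | h0
        · rw [← h0, Real.zero_rpow (by norm_num)]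
        · calc D = D ^ (1:ℝ) := (Real.rpow_one D).symm
          _ ≤ D ^ ((1:ℝ)/2) := Real.rpow_le_rpow_of_exponent_ge h0 hD1 (by norm_num)
      calc |Real.exp Δ - 1| ≤ 6 * D * Real.exp 6 := hb
        _ ≤ 6 * Real.exp 6 * D ^ ((1:ℝ)/2) := by nlinarith [Real.exp_pos (6:ℝ)]
  exact ⟨hmain, hmain⟩
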